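/- Let u : S¹ × (0,T) → N be smooth into a Riemannian manifold, with ∇ the pullback connection. Then d/dt ∫_{S¹} |∇_x u_x|² dx = 2∫ ⟨∇_x³ u_x, u_t⟩ dx + 2∫ ⟨u_t, R(∇_x u_x, u_x) u_x⟩ dx. -/
import Mathlib


open scoped RealInnerProductSpace
open Real

/-- An abstract model of the data attached to a smooth map `u : S¹ × ℝ → N` into a
Riemannian manifold: sections of the pullback bundle `u⁻¹TN` (with the fibers identified
with a fixed inner product space `V`), covariant derivatives `Dx`, `Dt` in the `x`- and
`t`-directions, the curvature `R` of `N` along `u`, together with their standard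
properties (periodicity in `x`, torsion-freeness `∇ₜuₓ = ∇ₓuₜ`, the commutation formula
`∇ₜ∇ₓ − ∇ₓ∇ₜ = R(uₜ,uₓ)`, metric compatibility, differentiation under the integral sign,
and the symmetries of the curvature tensor). Sections are written `s t x`. -/
structure CovSystem (V : Type*) [NormedAddCommGroup V] [InnerProductSpace ℝ V] where
  Sec : Set (ℝ → ℝ → V)
  ux : ℝ → ℝ → V
  ut : ℝ → ℝ → V
  Dx : (ℝ → ℝ → V) → ℝ → ℝ → V
  Dt : (ℝ → ℝ → V) → ℝ → ℝ → V
  R : ℝ → ℝ → V → V → V → V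
  mem_ux : ux ∈ Sec
  mem_ut : ut ∈ Sec
  mem_Dx : ∀ s ∈ Sec, Dx s ∈ Sec
  mem_Dt : ∀ s ∈ Sec, Dt s ∈ Sec
  mem_R : ∀ a ∈ Sec, ∀ b ∈ Sec, ∀ c ∈ Sec,
    (fun t x => R t x (a t x) (b t x) (c t x)) ∈ Sec
  cont : ∀ s ∈ Sec, Continuous fun p : ℝ × ℝ => s p.1 p.2
  periodic : ∀ s ∈ Sec, ∀ t x, s t (x + 2 * π) = s t x
  torsion : Dt ux = Dx ut
  comm : ∀ s ∈ Sec, ∀ t x,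
    Dt (Dx s) t x - Dx (Dt s) t x = R t x (ut t x) (ux t x) (s t x)
  metric_x : ∀ s ∈ Sec, ∀ r ∈ Sec, ∀ t x,
    HasDerivAt (fun y => ⟪s t y, r t y⟫) (⟪Dx s t x, r t x⟫ + ⟪s t x, Dx r t x⟫) x
  metric_t : ∀ s ∈ Sec, ∀ r ∈ Sec, ∀ t x,
    HasDerivAt (fun τ => ⟪s τ x, r τ x⟫) (⟪Dt s t x, r t x⟫ + ⟪s t x, Dt r t x⟫) t
  dint : ∀ s ∈ Sec, ∀ r ∈ Sec, ∀ t,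
    HasDerivAt (fun τ => ∫ x in (0 : ℝ)..(2 * π), ⟪s τ x, r τ x⟫)
      (∫ x in (0 : ℝ)..(2 * π), (⟪Dt s t x, r t x⟫ + ⟪s t x, Dt r t x⟫)) t
  R_antisym : ∀ t x a b c, R t x a b c = -R t x b a c
  R_skew : ∀ t x a b c d, ⟪R t x a b c, d⟫ = -⟪R t x a b d, c⟫
  R_pair : ∀ t x a b c d, ⟪R t x a b c, d⟫ = ⟪R t x c d a, b⟫


section Aux

variable {V : Type*} [NormedAddCommGroup V] [InnerProductSpace ℝ V]

lemma CovSystem.cont_x (F : CovSystem V) {s : ℝ → ℝ → V} (hs : s ∈ F.Sec) (t : ℝ) :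
    Continuous fun x => s t x :=
  (F.cont s hs).comp (Continuous.prodMk_right t)

lemma CovSystem.ibp (F : CovSystem V) {s r : ℝ → ℝ → V}
    (hs : s ∈ F.Sec) (hr : r ∈ F.Sec) (t : ℝ) :
    ∫ x in (0:ℝ)..(2*π), ⟪ F.Dx s t x, r t x ⟫ =
      - ∫ x in (0:ℝ)..(2*π), ⟪ s t x, F.Dx r t x ⟫ := by
  have h1 : Continuous fun x => ⟪ F.Dx s t x, r t x ⟫ :=
    (F.cont_x (F.mem_Dx s hs) t).inner (F.cont_x hr t)
  have h2 : Continuous fun x => ⟪ s t x, F.Dx r t x ⟫ :=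
    (F.cont_x hs t).inner (F.cont_x (F.mem_Dx r hr) t)
  have hsum : (∫ x in (0:ℝ)..(2*π),
      (⟪ F.Dx s t x, r t x ⟫ + ⟪ s t x, F.Dx r t x ⟫)) = 0 := by
    rw [intervalIntegral.integral_eq_sub_of_hasDerivAt
      (fun x _ => F.metric_x s hs r hr t x) ((h1.add h2).intervalIntegrable _ _)]
    have hp1 := F.periodic s hs t 0
    have hp2 := F.periodic r hr t 0
    rw [zero_add] at hp1 hp2
    rw [hp1, hp2, sub_self]
  rw [intervalIntegral.integral_add (h1.intervalIntegrable _ _)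
    (h2.intervalIntegrable _ _)] at hsum
  linarith

end Aux

/-- For a smooth map `u : S¹ × (0,T) → N` into a Riemannian manifold,
`d/dt ∫ |∇ₓuₓ|² dx = 2∫⟨∇ₓ³uₓ, uₜ⟩ dx + 2∫⟨uₜ, R(∇ₓuₓ, uₓ)uₓ⟩ dx`. -/
theorem stmt16 {V : Type*} [NormedAddCommGroup V] [InnerProductSpace ℝ V]
    (F : CovSystem V) :
    ∀ t : ℝ,
      HasDerivAt (fun τ => ∫ x in (0 : ℝ)..(2 * π), ⟪F.Dx F.ux τ x, F.Dx F.ux τ x⟫)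
        (2 * (∫ x in (0 : ℝ)..(2 * π), ⟪F.Dx (F.Dx (F.Dx F.ux)) t x, F.ut t x⟫)
          + 2 * ∫ x in (0 : ℝ)..(2 * π),
              ⟪F.ut t x, F.R t x (F.Dx F.ux t x) (F.ux t x) (F.ux t x)⟫) t := by
  intro t
  have hux := F.mem_ux
  have hut := F.mem_ut
  have hA : F.Dx F.ux ∈ F.Sec := F.mem_Dx _ hux
  have hA2 : F.Dx (F.Dx F.ux) ∈ F.Sec := F.mem_Dx _ hA
  have hDxut : F.Dx F.ut ∈ F.Sec := F.mem_Dx _ hut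
  have hD2ut : F.Dx (F.Dx F.ut) ∈ F.Sec := F.mem_Dx _ hDxut
  have hRmem : (fun τ x => F.R τ x (F.Dx F.ux τ x) (F.ux τ x) (F.ux τ x)) ∈ F.Sec :=
    F.mem_R _ hA _ hux _ hux
  have hder := F.dint _ hA _ hA t
  -- pointwise identity for Dt (Dx ux)
  have hDt : ∀ x, F.Dt (F.Dx F.ux) t x
      = F.Dx (F.Dx F.ut) t x + F.R t x (F.ut t x) (F.ux t x) (F.ux t x) := by
    intro x
    have h := F.comm F.ux hux t x
    rw [F.torsion] at h
    have := eq_add_of_sub_eq h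
    rw [this, add_comm]
  -- pointwise curvature symmetry
  have hptR : ∀ x, ⟪ F.R t x (F.ut t x) (F.ux t x) (F.ux t x), F.Dx F.ux t x ⟫
      = ⟪ F.ut t x, F.R t x (F.Dx F.ux t x) (F.ux t x) (F.ux t x) ⟫ := by
    intro x
    rw [F.R_pair, F.R_antisym t x (F.ux t x) (F.Dx F.ux t x), inner_neg_left,
      F.R_skew, neg_neg, real_inner_comm]
  -- rewrite the dint integrand
  have heq1 : (∫ x in (0:ℝ)..(2*π),
      (⟪ F.Dt (F.Dx F.ux) t x, F.Dx F.ux t x ⟫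
        + ⟪ F.Dx F.ux t x, F.Dt (F.Dx F.ux) t x ⟫))
      = 2 * ∫ x in (0:ℝ)..(2*π),
          (⟪ F.Dx (F.Dx F.ut) t x, F.Dx F.ux t x ⟫
            + ⟪ F.ut t x, F.R t x (F.Dx F.ux t x) (F.ux t x) (F.ux t x) ⟫) := by
    rw [← intervalIntegral.integral_const_mul]
    apply intervalIntegral.integral_congr
    intro x _
    dsimp only
    rw [hDt x, inner_add_left, inner_add_right, hptR x]
    linarith [real_inner_comm (F.Dx F.ux t x) (F.R t x (F.ut t x) (F.ux t x) (F.ux t x)),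
      hptR x, real_inner_comm (F.Dx F.ux t x) (F.Dx (F.Dx F.ut) t x)]
  have hint1 : IntervalIntegrable
      (fun x => ⟪ F.Dx (F.Dx F.ut) t x, F.Dx F.ux t x ⟫) MeasureTheory.volume 0 (2*π) :=
    ((F.cont_x hD2ut t).inner (F.cont_x hA t)).intervalIntegrable _ _
  have hint2 : IntervalIntegrable
      (fun x => ⟪ F.ut t x, F.R t x (F.Dx F.ux t x) (F.ux t x) (F.ux t x) ⟫)
      MeasureTheory.volume 0 (2*π) :=
    ((F.cont_x hut t).inner (F.cont_x hRmem t)).intervalIntegrable _ _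
  -- double integration by parts
  have hibp : (∫ x in (0:ℝ)..(2*π), ⟪ F.Dx (F.Dx F.ut) t x, F.Dx F.ux t x ⟫)
      = ∫ x in (0:ℝ)..(2*π), ⟪ F.Dx (F.Dx (F.Dx F.ux)) t x, F.ut t x ⟫ := by
    rw [F.ibp hDxut hA t, F.ibp hut hA2 t, neg_neg]
    apply intervalIntegral.integral_congr
    intro x _
    dsimp only
    exact real_inner_comm _ _
  have hval : (∫ x in (0:ℝ)..(2*π),
      (⟪ F.Dt (F.Dx F.ux) t x, F.Dx F.ux t x ⟫
        + ⟪ F.Dx F.ux t x, F.Dt (F.Dx F.ux) t x ⟫))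
      = 2 * (∫ x in (0:ℝ)..(2*π), ⟪ F.Dx (F.Dx (F.Dx F.ux)) t x, F.ut t x ⟫)
        + 2 * ∫ x in (0:ℝ)..(2*π),
            ⟪ F.ut t x, F.R t x (F.Dx F.ux t x) (F.ux t x) (F.ux t x) ⟫ := by
    rw [heq1, intervalIntegral.integral_add hint1 hint2, hibp]
    ring
  exact hval ▸ hder
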